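/- If R_M is an sQQR-domain for every maximal ideal M of the integral domain R, then R is an sQQR-domain. -/

import Mathlib

set_option maxHeartbeats 1000000

noncomputable section

/-- The image of `A` in `L` under the algebra map, as a set. -/
def imageR (A L : Type*) [CommRing A] [CommRing L] [Algebra A L] : Set L :=
  Set.range (algebraMap A L)

/-- The Kaplansky transform of an ideal `I` of `A`, computed inside `L`. -/
def omegaSet (A L : Type*) [CommRing A] [CommRing L] [Algebra A L] (I : Ideal A) : Set L :=
  {x : L | ∀ a ∈ I, ∃ n : ℕ, 1 ≤ n ∧ ∃ r : A, (algebraMap A L a) ^ n * x = algebraMap A L r}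

/-- The localization of `A` at the prime `P`, viewed as a subset of `L`. -/
def locSet (A L : Type*) [CommRing A] [CommRing L] [Algebra A L] (P : Ideal A) : Set L :=
  {x : L | ∃ s : A, s ∉ P ∧ ∃ r : A, x * algebraMap A L s = algebraMap A L r}

/-- The conductor ideal `(A :_A U) = {r : A | r • U ⊆ A}`. -/
def condIdeal (A L : Type*) [CommRing A] [CommRing L] [Algebra A L] (U : Set L) : Ideal A where
  carrier := {r : A | ∀ u ∈ U, ∃ r' : A, algebraMap A L r * u = algebraMap A L r'}
  zero_mem' := fun u _ => ⟨0, by simp⟩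
  add_mem' := by
    rintro a b ha hb u hu
    obtain ⟨a', ha'⟩ := ha u hu
    obtain ⟨b', hb'⟩ := hb u hu
    exact ⟨a' + b', by rw [map_add, map_add, add_mul, ha', hb']⟩
  smul_mem' := by
    rintro c r h u hu
    obtain ⟨r', hr'⟩ := h u hu
    exact ⟨c * r', by rw [smul_eq_mul, map_mul, map_mul, mul_assoc, hr']⟩

/-- A domain is an sQQR-domain if every simple overring `R[u]`, `u` in the quotient field,
is an intersection of localizations of `R` at primes. -/
def IsSQQR (A : Type*) [CommRing A] [IsDomain A] : Prop :=
  ∀ u : FractionRing A, ∃ Ps : Set (Ideal A), (∀ P ∈ Ps, P.IsPrime) ∧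
    (↑(Algebra.adjoin A {u} : Subalgebra A (FractionRing A)) : Set (FractionRing A)) =
      ⋂ P ∈ Ps, locSet A (FractionRing A) P

/-- A Prüfer domain: every localization at a prime is a valuation domain. -/
def IsPrufer (A : Type*) [CommRing A] [IsDomain A] : Prop :=
  ∀ (P : Ideal A) (hP : P.IsPrime),
    haveI := hP
    letI : IsDomain (Localization.AtPrime P) := IsLocalization.isDomain_of_local_atPrime hP
    ValuationRing (Localization.AtPrime P)


attribute [-instance] instAlgebraAtPrimeFractionRing

lemma mem_adjoin_equiv {S A B : Type*} [CommSemiring S] [Semiring A] [Semiring B]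
    [Algebra S A] [Algebra S B] (e : A ≃ₐ[S] B) (u : A) (x : B) :
    x ∈ Algebra.adjoin S {e u} ↔ e.symm x ∈ Algebra.adjoin S {u} := by
  have hmap : (Algebra.adjoin S {u}).map e.toAlgHom = Algebra.adjoin S {e u} := by
    rw [AlgHom.map_adjoin]
    congr 1
    simp
  constructor
  · intro hx
    rw [← hmap, Subalgebra.mem_map] at hx
    obtain ⟨y, hy, rfl⟩ := hx
    simpa using hy
  · intro hx
    rw [← hmap, Subalgebra.mem_map]
    exact ⟨e.symm x, hx, by simp⟩

lemma aux_smul (R : Type*) [CommRing R] [IsDomain R] (M : Ideal R) [M.IsPrime]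
    (u : FractionRing R) (p : Polynomial (Localization.AtPrime M)) :
    ∃ s : R, s ∉ M ∧ s • (Polynomial.aeval u p) ∈ Algebra.adjoin R {u} := by
  induction p using Polynomial.induction_on' with
  | add p q hp hq =>
    obtain ⟨s₁, hs₁, hp⟩ := hp
    obtain ⟨s₂, hs₂, hq⟩ := hq
    refine ⟨s₁ * s₂, fun hmem => ?_, ?_⟩
    · rcases (Ideal.IsPrime.mem_or_mem ‹M.IsPrime› hmem) with h | h
      exacts [hs₁ h, hs₂ h]
    · rw [map_add, smul_add]
      have h1 : (s₁ * s₂) • Polynomial.aeval u p = s₂ • (s₁ • Polynomial.aeval u p) := by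
        rw [smul_smul, mul_comm]
      have h2 : (s₁ * s₂) • Polynomial.aeval u q = s₁ • (s₂ • Polynomial.aeval u q) := by
        rw [smul_smul]
      rw [h1, h2]
      exact add_mem (Subalgebra.smul_mem _ hp _) (Subalgebra.smul_mem _ hq _)
  | monomial n a =>
    obtain ⟨⟨r, s⟩, hrs⟩ := IsLocalization.surj M.primeCompl a
    refine ⟨s, s.2, ?_⟩
    have key : (s : R) • Polynomial.aeval u ((Polynomial.monomial n) a)
        = algebraMap R (FractionRing R) r * u ^ n := by
      rw [Polynomial.aeval_monomial, Algebra.smul_def,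
        IsScalarTower.algebraMap_apply R (Localization.AtPrime M) (FractionRing R),
        IsScalarTower.algebraMap_apply R (Localization.AtPrime M) (FractionRing R) r,
        ← mul_assoc, ← map_mul, mul_comm (algebraMap R (Localization.AtPrime M) s) a, hrs]
    rw [key]
    exact Subalgebra.mul_mem _ (Subalgebra.algebraMap_mem _ r)
      (Subalgebra.pow_mem _ (Algebra.self_mem_adjoin_singleton R u) n)

lemma aux_adjoin (R : Type*) [CommRing R] [IsDomain R] (u x : FractionRing R) :
    x ∈ Algebra.adjoin R {u} ↔
      ∀ (M : Ideal R) (hM : M.IsMaximal),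
        haveI := hM.isPrime
        x ∈ Algebra.adjoin (Localization.AtPrime M) ({u} : Set (FractionRing R)) := by
  constructor
  · intro hx M hM
    haveI := hM.isPrime
    exact (Algebra.adjoin_le (fun y hy => Algebra.subset_adjoin hy) :
      Algebra.adjoin R {u} ≤ Subalgebra.restrictScalars R
        (Algebra.adjoin (Localization.AtPrime M) {u})) hx
  · intro H
    let J : Ideal R :=
      { carrier := {r : R | r • x ∈ Algebra.adjoin R {u}}
        zero_mem' := by
          simp only [Set.mem_setOf_eq, zero_smul]
          exact zero_mem _
        add_mem' := fun {a b} ha hb => by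
          simp only [Set.mem_setOf_eq, add_smul]
          exact add_mem ha hb
        smul_mem' := fun c r hr => by
          simp only [Set.mem_setOf_eq, smul_eq_mul, mul_smul]
          exact Subalgebra.smul_mem _ hr c }
    have hJ : J = ⊤ := by
      by_contra hne
      obtain ⟨M, hM, hle⟩ := Ideal.exists_le_maximal J hne
      haveI := hM.isPrime
      have hx := H M hM
      rw [Algebra.adjoin_singleton_eq_range_aeval, AlgHom.mem_range] at hx
      obtain ⟨p, hp⟩ := hx
      obtain ⟨s, hs, hmem⟩ := aux_smul R M u p
      rw [hp] at hmem
      exact hs (hle hmem)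
    have h1 : (1 : R) ∈ J := hJ.symm ▸ Submodule.mem_top
    have h2 : (1 : R) • x ∈ Algebra.adjoin R {u} := h1
    simpa using h2

lemma aux_loc (R : Type*) [CommRing R] [IsDomain R] (M : Ideal R) [M.IsPrime]
    (Q : Ideal (Localization.AtPrime M)) (hQ : Q.IsPrime) (x : FractionRing R) :
    x ∈ locSet R (FractionRing R) (Q.comap (algebraMap R (Localization.AtPrime M))) ↔
      (IsLocalization.algEquiv (nonZeroDivisors (Localization.AtPrime M))
        (FractionRing (Localization.AtPrime M)) (FractionRing R)).symm x ∈
        locSet (Localization.AtPrime M) (FractionRing (Localization.AtPrime M)) Q := by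
  set RM := Localization.AtPrime M
  set e := IsLocalization.algEquiv (nonZeroDivisors RM) (FractionRing RM) (FractionRing R)
  constructor
  · rintro ⟨s, hs, r, hx⟩
    rw [Ideal.mem_comap] at hs
    refine ⟨algebraMap R RM s, hs, algebraMap R RM r, e.injective ?_⟩
    rw [map_mul, AlgEquiv.apply_symm_apply, AlgEquiv.commutes, AlgEquiv.commutes,
      ← IsScalarTower.algebraMap_apply, ← IsScalarTower.algebraMap_apply]
    exact hx
  · rintro ⟨s, hs, r, hx⟩
    obtain ⟨⟨s₁, t₁⟩, hst⟩ := IsLocalization.surj M.primeCompl s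
    obtain ⟨⟨r₁, t₂⟩, hrt⟩ := IsLocalization.surj M.primeCompl r
    have hu1 : ¬ (algebraMap R RM t₁ ∈ Q) := fun hmem =>
      hQ.1 (Q.eq_top_of_isUnit_mem hmem (IsLocalization.map_units RM t₁))
    have hu2 : ¬ (algebraMap R RM t₂ ∈ Q) := fun hmem =>
      hQ.1 (Q.eq_top_of_isUnit_mem hmem (IsLocalization.map_units RM t₂))
    have hx' : x * algebraMap RM (FractionRing R) s = algebraMap RM (FractionRing R) r := by
      have := congrArg e hx
      rw [map_mul, AlgEquiv.apply_symm_apply, AlgEquiv.commutes, AlgEquiv.commutes] at this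
      exact this
    refine ⟨s₁ * (t₂ : R), ?_, r₁ * (t₁ : R), ?_⟩
    · rw [Ideal.mem_comap, map_mul]
      intro hmem
      rcases hQ.mem_or_mem hmem with h | h
      · rw [← hst] at h
        rcases hQ.mem_or_mem h with h' | h'
        exacts [hs h', hu1 h']
      · exact hu2 h
    · rw [IsScalarTower.algebraMap_apply R RM (FractionRing R),
        IsScalarTower.algebraMap_apply R RM (FractionRing R) (r₁ * (t₁ : R)),
        map_mul (algebraMap R RM), map_mul (algebraMap R RM), ← hst, ← hrt]
      rw [map_mul, map_mul, map_mul, map_mul]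
      linear_combination (algebraMap RM (FractionRing R) (algebraMap R RM t₁) *
        algebraMap RM (FractionRing R) (algebraMap R RM t₂)) * hx'

theorem stmt10 (R : Type*) [CommRing R] [IsDomain R]
    (h : ∀ (M : Ideal R) (hM : M.IsMaximal),
      haveI := hM.isPrime
      letI : IsDomain (Localization.AtPrime M) :=
        IsLocalization.isDomain_of_local_atPrime hM.isPrime
      IsSQQR (Localization.AtPrime M)) :
    IsSQQR R := by
  intro u
  classical
  have key : ∀ (M : Ideal R) (hM : M.IsMaximal),
      haveI := hM.isPrime
      ∃ Qs : Set (Ideal (Localization.AtPrime M)),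
        (∀ Q ∈ Qs, Q.IsPrime) ∧
        ∀ x : FractionRing R,
          (x ∈ Algebra.adjoin (Localization.AtPrime M) ({u} : Set (FractionRing R)) ↔
            ∀ Q ∈ Qs, x ∈ locSet R (FractionRing R)
              (Q.comap (algebraMap R (Localization.AtPrime M)))) := by
    intro M hM
    haveI := hM.isPrime
    letI : IsDomain (Localization.AtPrime M) :=
      IsLocalization.isDomain_of_local_atPrime hM.isPrime
    set e := IsLocalization.algEquiv (nonZeroDivisors (Localization.AtPrime M))
      (FractionRing (Localization.AtPrime M)) (FractionRing R) with he
    obtain ⟨Qs, hprime, heq⟩ := h M hM (e.symm u)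
    refine ⟨Qs, hprime, fun x => ?_⟩
    have h1 : x ∈ Algebra.adjoin (Localization.AtPrime M) ({u} : Set (FractionRing R)) ↔
        e.symm x ∈ Algebra.adjoin (Localization.AtPrime M) {e.symm u} := by
      have h0 := mem_adjoin_equiv e (e.symm u) x
      rwa [AlgEquiv.apply_symm_apply] at h0
    rw [h1]
    have h2 := Set.ext_iff.mp heq (e.symm x)
    simp only [SetLike.mem_coe, Set.mem_iInter] at h2
    rw [h2]
    constructor
    · intro H Q hQ
      exact (aux_loc R M Q (hprime Q hQ) x).mpr (H Q hQ)
    · intro H Q hQ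
      exact (aux_loc R M Q (hprime Q hQ) x).mp (H Q hQ)
  choose Qs hQsPrime hQsEq using key
  refine ⟨{P : Ideal R | ∃ (M : Ideal R) (hM : M.IsMaximal)
      (Q : Ideal (Localization.AtPrime M)),
      Q ∈ Qs M hM ∧ P = Q.comap (algebraMap R (Localization.AtPrime M))}, ?_, ?_⟩
  · rintro P ⟨M, hM, Q, hQ, rfl⟩
    haveI := hM.isPrime
    haveI := hQsPrime M hM Q hQ
    exact Ideal.IsPrime.comap _
  · ext x
    simp only [SetLike.mem_coe, Set.mem_iInter, Set.mem_setOf_eq]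
    rw [aux_adjoin R u x]
    constructor
    · intro H P hP
      obtain ⟨M, hM, Q, hQ, rfl⟩ := hP
      exact (hQsEq M hM x).mp (H M hM) Q hQ
    · intro H M hM
      exact (hQsEq M hM x).mpr fun Q hQ => H _ ⟨M, hM, Q, hQ, rfl⟩


end
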